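/- arXiv:2505.14767 — 3 statements merged into one kernel-verified Lean document; each statement's English description precedes it below -/
import Mathlib

section
/- Let G be a group and I a nonempty finite type of labels ('anyons') equipped with: a surjective grading map γ : I → G; a duality map ι : I → I satisfying γ(ι(a)) = γ(a)⁻¹ for all a; fusion multiplicities N : I → I → I → ℕ; and quantum dimensions d : I → ℝ with d(a) > 0 for all a. Assume: (i) d(ι(a)) = d(a) for all a; (ii) d(a)·d(b) = Σ_{x∈I} N(a,b,x)·d(x) for all a,b; (iii) Frobenius reciprocity N(a, ι(b), x) = N(x, b, a) for all a,b,x; (iv) the grading is compatible with fusion: N(a,b,x) ≠ 0 implies γ(x) = γ(a)·γ(b). Then for all g, h ∈ G, Σ_{a : γ(a)=g} d(a)² = Σ_{a : γ(a)=h} d(a)²; in particular every graded component has the same total quantum dimension squared as the identity component. -/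
/-- G-graded fusion: in a theory with G-graded fusion rules, the total quantum
dimension squared of each graded component is the same. -/
theorem graded_components_equal_quantum_dimension
    {G : Type*} [Group G] [DecidableEq G]
    {I : Type*} [Fintype I] [Nonempty I]
    (γ : I → G) (hγ : Function.Surjective γ)
    (ι : I → I) (hι : ∀ a, γ (ι a) = (γ a)⁻¹)
    (N : I → I → I → ℕ)
    (d : I → ℝ) (hd : ∀ a, 0 < d a)
    (hdual : ∀ a, d (ι a) = d a)
    (hfusion : ∀ a b, d a * d b = ∑ x, (N a b x : ℝ) * d x)
    (hfrob : ∀ a b x, N a (ι b) x = N x b a)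
    (hgrade : ∀ a b x, N a b x ≠ 0 → γ x = γ a * γ b) :
    ∀ g h : G,
      ∑ a ∈ Finset.univ.filter (fun a => γ a = g), d a ^ 2
        = ∑ a ∈ Finset.univ.filter (fun a => γ a = h), d a ^ 2 := by
  have key : ∀ (g : G) (b : I),
      (∑ a ∈ Finset.univ.filter (fun a => γ a = g), d a ^ 2)
        = ∑ a ∈ Finset.univ.filter (fun a => γ a = g * γ b), d a ^ 2 := by
    intro g b
    have hb : d b ≠ 0 := (hd b).ne'
    refine mul_right_cancel₀ hb ?_
    rw [Finset.sum_mul, Finset.sum_mul, Finset.sum_filter, Finset.sum_filter]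
    have L : ∀ a : I, d a ^ 2 * d b = ∑ x, (N a b x : ℝ) * (d a * d x) := by
      intro a
      rw [pow_two, mul_assoc, hfusion a b, Finset.mul_sum]
      exact Finset.sum_congr rfl fun x _ => by ring
    have R : ∀ x : I, d x ^ 2 * d b = ∑ a, (N a b x : ℝ) * (d a * d x) := by
      intro x
      have hxb : d x * d b = ∑ a, (N a b x : ℝ) * d a := by
        rw [← hdual b, hfusion x (ι b)]
        exact Finset.sum_congr rfl fun a _ => by rw [hfrob x b a]
      rw [pow_two, mul_assoc, hxb, Finset.mul_sum]
      exact Finset.sum_congr rfl fun a _ => by ring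
    calc (∑ a, if γ a = g then d a ^ 2 * d b else 0)
        = ∑ a, ∑ x, (if γ a = g then (N a b x : ℝ) * (d a * d x) else 0) := by
          refine Finset.sum_congr rfl fun a _ => ?_
          by_cases h : γ a = g
          · simp [h, L a]
          · simp [h]
      _ = ∑ x, ∑ a, (if γ a = g then (N a b x : ℝ) * (d a * d x) else 0) :=
          Finset.sum_comm
      _ = ∑ x, ∑ a, (if γ x = g * γ b then (N a b x : ℝ) * (d a * d x) else 0) := by
          refine Finset.sum_congr rfl fun x _ => Finset.sum_congr rfl fun a _ => ?_
          by_cases hN : N a b x = 0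
          · simp [hN]
          · have hx := hgrade a b x hN
            have : (γ a = g) ↔ (γ x = g * γ b) := by
              constructor
              · intro h; rw [hx, h]
              · intro h; rw [hx] at h; exact mul_right_cancel h
            simp [this]
      _ = ∑ x, (if γ x = g * γ b then d x ^ 2 * d b else 0) := by
          refine Finset.sum_congr rfl fun x _ => ?_
          by_cases h : γ x = g * γ b
          · simp [h, R x]
          · simp [h]
  intro g h
  obtain ⟨b, hb⟩ := hγ (g⁻¹ * h)
  have hk := key g b
  rw [hb, mul_inv_cancel_left] at hk
  exact hk
end

section
/- Let A be a finite additive abelian group, B : A → A → ℚ/ℤ additive in each argument and symmetric, and c ∈ A an element with c ≠ 0 and 2c = 0. Assume the radical {a ∈ A : B(a,x) = 0 for all x ∈ A} is exactly the two-element set {0, c}. Then for every additive group homomorphism φ : A → ℚ/ℤ with φ(c) = 0 there exists w ∈ A with φ(x) = B(w,x) for all x ∈ A, and the set of all such w is exactly {w, w + c}, i.e., w is unique up to addition of c. -/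
namespace VisonAux

open AddCircle

/-- The natural injection `ℚ/ℤ → ℝ/ℤ`. -/
noncomputable def ratToRealCircle : AddCircle (1 : ℚ) →+ AddCircle (1 : ℝ) :=
  QuotientAddGroup.map _ _ (Rat.castHom ℝ).toAddMonoidHom (by
    intro q hq
    obtain ⟨k, hk⟩ := AddSubgroup.mem_zmultiples_iff.mp hq
    refine AddSubgroup.mem_comap.mpr (AddSubgroup.mem_zmultiples_iff.mpr ⟨k, ?_⟩)
    have : (q : ℚ) = k := by simpa using hk.symm
    simp [this])

lemma ratToRealCircle_mk (q : ℚ) :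
    ratToRealCircle ((q : AddCircle (1 : ℚ))) = ((q : ℝ) : AddCircle (1 : ℝ)) := rfl

lemma ratToRealCircle_injective : Function.Injective ratToRealCircle := by
  intro a b h
  induction a using QuotientAddGroup.induction_on with | H q =>
  induction b using QuotientAddGroup.induction_on with | H q' =>
  rw [ratToRealCircle_mk, ratToRealCircle_mk] at h
  rw [QuotientAddGroup.eq] at h ⊢
  obtain ⟨k, hk⟩ := AddSubgroup.mem_zmultiples_iff.mp h
  refine AddSubgroup.mem_zmultiples_iff.mpr ⟨k, ?_⟩
  have : ((k : ℚ) : ℝ) = ((-q + q' : ℚ) : ℝ) := by push_cast; simpa using hk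
  have h2 : (k : ℚ) = -q + q' := by exact_mod_cast this
  simpa using h2

/-- The injection `ℚ/ℤ → ℂ` as a character. -/
noncomputable def eC (x : AddCircle (1 : ℚ)) : ℂ :=
  (AddCircle.toCircle (ratToRealCircle x) : ℂ)

lemma eC_zero : eC 0 = 1 := by
  simp [eC]

lemma eC_add (x y : AddCircle (1 : ℚ)) : eC (x + y) = eC x * eC y := by
  simp [eC, map_add, AddCircle.toCircle_add]

lemma eC_injective : Function.Injective eC := by
  intro a b h
  exact ratToRealCircle_injective
    (AddCircle.injective_toCircle one_ne_zero (Subtype.ext h))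

/-- Homomorphisms to `ℚ/ℤ` embed into complex characters. -/
noncomputable def toAddChar {A : Type*} [AddCommGroup A]
    (φ : A →+ AddCircle (1 : ℚ)) : AddChar A ℂ where
  toFun := fun a => eC (φ a)
  map_zero_eq_one' := by simp [eC_zero]
  map_add_eq_mul' := fun a b => by simp [eC_add]

lemma toAddChar_injective {A : Type*} [AddCommGroup A] :
    Function.Injective (toAddChar (A := A)) := by
  intro φ ψ h
  ext a
  exact eC_injective (congrFun (congrArg (fun χ : AddChar A ℂ => ⇑χ) h) a)

lemma finite_hom {A : Type*} [AddCommGroup A] [Fintype A] :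
    Finite (A →+ AddCircle (1 : ℚ)) :=
  Finite.of_injective _ (toAddChar_injective (A := A))

lemma card_hom_le {A : Type*} [AddCommGroup A] [Fintype A] :
    Nat.card (A →+ AddCircle (1 : ℚ)) ≤ Nat.card A := by
  have h1 : Nat.card (A →+ AddCircle (1 : ℚ)) ≤ Nat.card (AddChar A ℂ) :=
    Nat.card_le_card_of_injective _ (toAddChar_injective (A := A))
  refine h1.trans ?_
  rw [Nat.card_eq_fintype_card, Nat.card_eq_fintype_card]
  exact AddChar.card_addChar_le A ℂ

/-- the element 1/2 of ℚ/ℤ -/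
noncomputable def half : AddCircle (1 : ℚ) := ((1/2 : ℚ) : AddCircle (1 : ℚ))

lemma half_ne_zero : half ≠ 0 := by
  intro h
  obtain ⟨n, hn⟩ := (AddCircle.coe_eq_zero_iff _).mp h
  have : (n : ℚ) = 1/2 := by simpa using hn
  have h2 : (2 * n : ℚ) = 1 := by rw [mul_comm, this]; norm_num
  have : (2 * n : ℤ) = 1 := by exact_mod_cast h2
  omega

lemma two_torsion (x : AddCircle (1 : ℚ)) (h : 2 • x = 0) : x = 0 ∨ x = half := by
  induction x using QuotientAddGroup.induction_on with | H q =>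
  have h2 : ((2 * q : ℚ) : AddCircle (1 : ℚ)) = 0 := by
    rw [← h, two_smul]
    show _ = QuotientAddGroup.mk q + QuotientAddGroup.mk q
    rw [← QuotientAddGroup.mk_add]
    exact congrArg _ (by ring)
  obtain ⟨n, hn⟩ := (AddCircle.coe_eq_zero_iff _).mp h2
  have hq : 2 * q = n := by simpa using hn.symm
  rcases Int.even_or_odd n with ⟨m, hm⟩ | ⟨m, hm⟩
  · left
    rw [AddCircle.coe_eq_zero_iff]
    refine ⟨m, ?_⟩
    have : q = (m : ℚ) := by
      have : (2 : ℚ) * q = 2 * m := by rw [hq, hm]; push_cast; ring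
      linarith
    simp [this]
  · right
    rw [half, QuotientAddGroup.eq]
    refine AddSubgroup.mem_zmultiples_iff.mpr ⟨-m, ?_⟩
    have hqm : q = (m : ℚ) + 1/2 := by
      have : (2 : ℚ) * q = 2 * m + 1 := by rw [hq, hm]; push_cast; ring
      linarith
    push_cast [hqm]
    simp [zsmul_eq_mul]

end VisonAux

/-- Super-modular version: if the radical of the symmetric biadditive pairing is
exactly {0, c} with c of order two, then any homomorphism to ℚ/ℤ vanishing on c
is represented by braiding with an element, unique up to addition of c. -/
theorem exists_vison_unique_up_to_fermion
    {A : Type*} [AddCommGroup A] [Fintype A]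
    (B : A → A → AddCircle (1 : ℚ))
    (hBl : ∀ a b x, B (a + b) x = B a x + B b x)
    (hBr : ∀ a x y, B a (x + y) = B a x + B a y)
    (hsymm : ∀ a b, B a b = B b a)
    (c : A) (hc : c ≠ 0) (hc2 : 2 • c = 0)
    (hrad : ∀ a, (∀ x, B a x = 0) ↔ (a = 0 ∨ a = c))
    (φ : A →+ AddCircle (1 : ℚ)) (hφc : φ c = 0) :
    ∃ w : A, (∀ x, φ x = B w x) ∧
      (∀ w' : A, (∀ x, φ x = B w' x) ↔ (w' = w ∨ w' = w + c)) := by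
  classical
  have : Finite (A →+ AddCircle (1 : ℚ)) := VisonAux.finite_hom
  -- basic identities
  have hB0 : ∀ a, B a 0 = 0 := by
    intro a
    have h := hBr a 0 0
    rw [add_zero] at h
    exact (left_eq_add.mp h)
  have hBc : ∀ a, B a c = 0 := fun a => (hsymm a c).trans ((hrad c).mpr (Or.inr rfl) a)
  have hB0l : ∀ x, B 0 x = 0 := (hrad 0).mpr (Or.inl rfl)
  -- the map T
  let T : A →+ (A →+ AddCircle (1 : ℚ)) :=
  { toFun := fun a => { toFun := fun x => B a x, map_zero' := hB0 a, map_add' := hBr a }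
    map_zero' := by ext x; exact hB0l x
    map_add' := fun a b => by ext x; exact hBl a b x }
  have hTapp : ∀ a x, T a x = B a x := fun a x => rfl
  -- kernel of T is {0, c}
  have hker : (T.ker : Set A) = {0, c} := by
    ext a
    simp only [SetLike.mem_coe, AddMonoidHom.mem_ker, Set.mem_insert_iff, Set.mem_singleton_iff]
    constructor
    · intro h
      exact (hrad a).mp (fun x => by rw [← hTapp a x, h]; rfl)
    · intro h
      ext x
      exact ((hrad a).mpr h) x
  have hkercard : Nat.card T.ker = 2 := by
    have h : Nat.card T.ker = Nat.card ({0, c} : Set A) :=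
      Nat.card_congr (Equiv.setCongr hker)
    rw [h, Nat.card_coe_set_eq, Set.ncard_pair (Ne.symm hc)]
  -- evaluation at c
  let ev : (A →+ AddCircle (1 : ℚ)) →+ AddCircle (1 : ℚ) :=
  { toFun := fun ψ => ψ c
    map_zero' := rfl
    map_add' := fun ψ χ => rfl }
  -- range of ev is {0, half}
  obtain ⟨χ₀, hχ₀⟩ := CharacterModule.exists_character_apply_ne_zero_of_ne_zero (A := A) hc
  have hχ₀' : (χ₀ : A →+ AddCircle (1 : ℚ)) c ≠ 0 := hχ₀
  have hevrange : (ev.range : Set (AddCircle (1 : ℚ))) = {0, VisonAux.half} := by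
    ext x
    simp only [SetLike.mem_coe, AddMonoidHom.mem_range, Set.mem_insert_iff,
      Set.mem_singleton_iff]
    constructor
    · rintro ⟨ψ, rfl⟩
      refine VisonAux.two_torsion _ ?_
      show 2 • ψ c = 0
      rw [← map_nsmul, hc2, map_zero]
    · rintro (rfl | rfl)
      · exact ⟨0, rfl⟩
      · refine ⟨χ₀, ?_⟩
        rcases VisonAux.two_torsion ((χ₀ : A →+ AddCircle (1 : ℚ)) c)
          (by rw [← map_nsmul, hc2, map_zero]) with h | h
        · exact absurd h hχ₀'
        · exact h
  have hevcard : Nat.card ev.range = 2 := by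
    have h : Nat.card ev.range = Nat.card ({0, VisonAux.half} : Set (AddCircle (1 : ℚ))) :=
      Nat.card_congr (Equiv.setCongr hevrange)
    rw [h, Nat.card_coe_set_eq, Set.ncard_pair (Ne.symm VisonAux.half_ne_zero)]
  -- cardinality comparison
  have hA : Nat.card A = Nat.card T.range * 2 := by
    have h1 := AddSubgroup.card_eq_card_quotient_mul_card_addSubgroup T.ker
    have h2 : Nat.card (A ⧸ T.ker) = Nat.card T.range :=
      Nat.card_congr (QuotientAddGroup.quotientKerEquivRange T).toEquiv
    rw [h1, h2, hkercard]
  have hG : Nat.card (A →+ AddCircle (1 : ℚ)) = 2 * Nat.card ev.ker := by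
    have h1 := AddSubgroup.card_eq_card_quotient_mul_card_addSubgroup ev.ker
    have h2 : Nat.card ((A →+ AddCircle (1 : ℚ)) ⧸ ev.ker) = Nat.card ev.range :=
      Nat.card_congr (QuotientAddGroup.quotientKerEquivRange ev).toEquiv
    rw [h1, h2, hevcard]
  have hle : Nat.card ev.ker ≤ Nat.card T.range := by
    have h := VisonAux.card_hom_le (A := A)
    rw [hG, hA] at h
    omega
  -- range T ⊆ ker ev, hence equal
  have hsub : (T.range : Set (A →+ AddCircle (1 : ℚ))) ⊆ (ev.ker : Set _) := by
    rintro ψ ⟨a, rfl⟩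
    exact hBc a
  have hset : (T.range : Set (A →+ AddCircle (1 : ℚ))) = (ev.ker : Set _) := by
    refine Set.eq_of_subset_of_ncard_le hsub ?_ (Set.toFinite _)
    rw [← Nat.card_coe_set_eq, ← Nat.card_coe_set_eq]
    exact hle
  -- φ lies in ker ev = range T
  have hφmem : φ ∈ (ev.ker : Set (A →+ AddCircle (1 : ℚ))) := hφc
  rw [← hset] at hφmem
  obtain ⟨w, hw⟩ := hφmem
  have hwφ : ∀ x, φ x = B w x := fun x => by rw [← hw]; rfl
  refine ⟨w, hwφ, fun w' => ?_⟩
  constructor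
  · intro hw'
    have hdiff : ∀ x, B (w' - w) x = 0 := by
      intro x
      have h1 : B ((w' - w) + w) x = B (w' - w) x + B w x := hBl _ _ x
      rw [sub_add_cancel] at h1
      have h2 : B w' x = B w x := by rw [← hw' x, ← hwφ x]
      rw [h2] at h1
      exact (right_eq_add.mp h1)
    rcases (hrad (w' - w)).mp hdiff with h | h
    · left; exact sub_eq_zero.mp h
    · right; rw [← h]; abel
  · rintro (rfl | rfl)
    · exact hwφ
    · intro x
      rw [hwφ x, hBl w c x, (hrad c).mpr (Or.inr rfl) x, add_zero]
end

section
/- Let s be a positive integer and r, u, m, m̂ integers with m·m̂ ≡ 1 (mod s) and rs even. Then (m²r)·(m̂ u)²/s − r·u²/s is an even integer. Hence the relabeling (r,u) ↦ (m²r, m̂ u) induced by changing the generator of the ℤ_s symmetry lines preserves the Hall conductivity σ_H = r u²/s modulo 2. -/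
/-- The relabeling (r, u) ↦ (m²r, m̂u) induced by changing the generator of the
ℤ_s symmetry lines (with rs even) preserves the Hall conductivity
σ_H = r u²/s modulo 2. -/
theorem relabeling_preserves_hall_conductivity (s : ℤ) (hs : 0 < s)
    (r u m mhat : ℤ) (hinv : s ∣ m * mhat - 1) (hrs : 2 ∣ r * s) :
    ∃ k : ℤ,
      ((m^2 * r : ℤ) : ℚ) * ((mhat * u : ℤ) : ℚ)^2 / (s : ℚ)
        - (r : ℚ) * (u : ℚ)^2 / (s : ℚ) = 2 * (k : ℚ) := by
  obtain ⟨t, ht⟩ := hinv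
  obtain ⟨c, hc⟩ := hrs
  refine ⟨r * u^2 * t + c * u^2 * t^2, ?_⟩
  have hs0 : (s : ℚ) ≠ 0 := Int.cast_ne_zero.mpr hs.ne'
  have hm : (m : ℚ) * mhat = s * t + 1 := by
    have h : ((m * mhat - 1 : ℤ) : ℚ) = ((s * t : ℤ) : ℚ) := by exact_mod_cast ht
    push_cast at h; linarith
  have hc' : (r : ℚ) * s = 2 * c := by exact_mod_cast congrArg (Int.cast : ℤ → ℚ) hc
  field_simp
  push_cast
  linear_combination ((r:ℚ) * u^2 * ((m:ℚ) * mhat + (s:ℚ) * t + 1)) * hm + ((u:ℚ)^2 * t^2 * s) * hc'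
end
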